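/- Smoothness of resilience: for any bag A and any vertex v ∉ A, γ(A ∪ {v}) ≤ γ(A) + Δ, where Δ is the maximum degree of the graph. -/

import Mathlib

open Finset

variable {V : Type*} [Fintype V] [DecidableEq V]

/-- The cut of a bag `A`: the number of edges of `G` with exactly one endpoint in `A`. -/
def cut (G : SimpleGraph V) [DecidableRel G.Adj] (A : Finset V) : ℕ :=
  ((A ×ˢ Aᶜ).filter fun p => G.Adj p.1 p.2).card

/-- An `(A–B)`-crusade of length `k+1`: a sequence of bags starting at `A`, ending at `B`,
removing at most one node at each step. -/
def IsCrusade (A B : Finset V) (k : ℕ) (ω : ℕ → Finset V) : Prop :=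
  ω 0 = A ∧ ω k = B ∧ ∀ i < k, (ω i \ ω (i + 1)).card ≤ 1

/-- The width of a crusade: the maximum cut encountered after the first bag. -/
def width (G : SimpleGraph V) [DecidableRel G.Adj] (k : ℕ) (ω : ℕ → Finset V) : ℕ :=
  (Finset.Icc 1 k).sup fun i => cut G (ω i)

/-- The resilience of a bag `A`: the minimum width over all `(A–∅)`-crusades. -/
noncomputable def resilience (G : SimpleGraph V) [DecidableRel G.Adj] (A : Finset V) : ℕ :=
  sInf {w | ∃ (k : ℕ) (ω : ℕ → Finset V), IsCrusade A ∅ k ω ∧ width G k ω = w}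

/-- A crusade is monotone if each bag contains the next. -/
def IsMonotone (k : ℕ) (ω : ℕ → Finset V) : Prop :=
  ∀ i < k, ω (i + 1) ⊆ ω i

/-- The CutWidth of `G`: the minimum width over all monotone `(V–∅)`-crusades. -/
noncomputable def cutWidth (G : SimpleGraph V) [DecidableRel G.Adj] : ℕ :=
  sInf {w | ∃ (k : ℕ) (ω : ℕ → Finset V),
    IsCrusade Finset.univ ∅ k ω ∧ IsMonotone k ω ∧ width G k ω = w}

lemma exists_crusade (A : Finset V) : ∃ k ω, IsCrusade A ∅ k ω := by
  induction A using Finset.strongInduction with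
  | _ A ih =>
    rcases A.eq_empty_or_nonempty with rfl | ⟨a, ha⟩
    · exact ⟨0, fun _ => ∅, rfl, rfl, by omega⟩
    · obtain ⟨k, ω, h0, hk, hstep⟩ := ih (A.erase a) (Finset.erase_ssubset ha)
      refine ⟨k + 1, fun i => if i = 0 then A else ω (i - 1), by simp, by simp [hk], ?_⟩
      intro i hi
      match i with
      | 0 =>
        simp only [if_pos rfl, if_neg Nat.one_ne_zero]
        simp only [Nat.sub_self, h0]
        have hsub : A \ A.erase a ⊆ {a} := by
          intro x hx
          simp only [Finset.mem_sdiff, Finset.mem_erase] at hx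
          simp only [Finset.mem_singleton]
          by_contra h
          exact hx.2 ⟨h, hx.1⟩
        calc (A \ A.erase a).card ≤ ({a} : Finset V).card := Finset.card_le_card hsub
          _ = 1 := Finset.card_singleton a
      | j + 1 =>
        simp only [if_neg (Nat.succ_ne_zero j), Nat.add_sub_cancel]
        exact hstep j (by omega)

lemma cut_insert_le (G : SimpleGraph V) [DecidableRel G.Adj] (v : V) (B : Finset V) :
    cut G (insert v B) ≤ cut G B + G.degree v := by
  by_cases hvB : v ∈ B
  · rw [Finset.insert_eq_self.mpr hvB]; omega
  unfold cut
  set S := ((insert v B ×ˢ (insert v B)ᶜ).filter fun p => G.Adj p.1 p.2) with hS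
  have hsplit := Finset.card_filter_add_card_filter_not
    (s := S) (p := fun p => p.1 = v)
  have h1 : (S.filter fun p => p.1 = v).card ≤ G.degree v := by
    rw [← SimpleGraph.card_neighborFinset_eq_degree]
    apply Finset.card_le_card_of_injOn Prod.snd
    · intro p hp
      simp only [hS, Finset.mem_coe, Finset.mem_filter, Finset.mem_product] at hp
      rw [Finset.mem_coe, SimpleGraph.mem_neighborFinset]
      exact hp.2 ▸ hp.1.2
    · intro p hp q hq hpq
      simp only [hS, Finset.mem_coe, Finset.mem_filter] at hp hq
      exact Prod.ext (hp.2.trans hq.2.symm) hpq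
  have h2 : (S.filter fun p => ¬ p.1 = v).card ≤
      ((B ×ˢ Bᶜ).filter fun p => G.Adj p.1 p.2).card := by
    apply Finset.card_le_card
    intro p hp
    simp only [hS, Finset.mem_filter, Finset.mem_product, Finset.mem_insert,
      Finset.mem_compl] at hp ⊢
    obtain ⟨⟨⟨h1v, h2v⟩, hadj⟩, hne⟩ := hp
    refine ⟨⟨h1v.resolve_left hne, fun hb => h2v (Or.inr hb)⟩, hadj⟩
  omega

lemma cut_empty (G : SimpleGraph V) [DecidableRel G.Adj] : cut G (∅ : Finset V) = 0 := by
  simp [cut]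

theorem resilience_smooth (G : SimpleGraph V) [DecidableRel G.Adj]
    (hconn : G.Connected) (hΔ : 0 < G.maxDegree) (A : Finset V) (v : V) (hv : v ∉ A) :
    resilience G (insert v A) ≤ resilience G A + G.maxDegree := by
  have hne : {w | ∃ (k : ℕ) (ω : ℕ → Finset V), IsCrusade A ∅ k ω ∧ width G k ω = w}.Nonempty := by
    obtain ⟨k, ω, h⟩ := exists_crusade A
    exact ⟨width G k ω, k, ω, h, rfl⟩
  obtain ⟨k, ω, ⟨h0, hk, hstep⟩, hw⟩ := Nat.sInf_mem hne
  set ω' : ℕ → Finset V := fun i => if i ≤ k then insert v (ω i) else ∅ with hω'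
  have hcr : IsCrusade (insert v A) ∅ (k + 1) ω' := by
    refine ⟨by simp [hω', h0], by simp [hω'], ?_⟩
    intro i hi
    rcases Nat.lt_or_ge i k with hik | hik
    · have : ω' i \ ω' (i + 1) ⊆ ω i \ ω (i + 1) := by
        simp only [hω', if_pos (le_of_lt hik), if_pos (Nat.succ_le_of_lt hik)]
        intro x hx
        simp only [Finset.mem_sdiff, Finset.mem_insert] at hx ⊢
        refine ⟨hx.1.resolve_left (fun h => hx.2 (Or.inl h)), fun h => hx.2 (Or.inr h)⟩
      exact le_trans (Finset.card_le_card this) (hstep i hik)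
    · have hik' : i = k := by omega
      subst hik'
      simp only [hω', if_pos (le_refl i), if_neg (by omega : ¬ i + 1 ≤ i), hk,
        Finset.sdiff_empty]
      simpa using Finset.card_insert_of_not_mem (Finset.not_mem_empty v)
  have hwle : width G (k + 1) ω' ≤ resilience G A + G.maxDegree := by
    apply Finset.sup_le
    intro i hi
    rw [Finset.mem_Icc] at hi
    rcases Nat.lt_or_ge i (k + 1) with hik | hik
    · have hik' : i ≤ k := by omega
      simp only [hω', if_pos hik']
      calc cut G (insert v (ω i)) ≤ cut G (ω i) + G.degree v := cut_insert_le G v (ω i)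
        _ ≤ width G k ω + G.maxDegree := by
            unfold width
            exact Nat.add_le_add (Finset.le_sup (f := fun i => cut G (ω i))
              (Finset.mem_Icc.mpr ⟨hi.1, hik'⟩)) (G.degree_le_maxDegree v)
        _ = resilience G A + G.maxDegree := by rw [hw]; rfl
    · have : i = k + 1 := by omega
      subst this
      simp only [hω', if_neg (by omega : ¬ k + 1 ≤ k), cut_empty]
      exact Nat.zero_le _
  exact le_trans (Nat.sInf_le ⟨k + 1, ω', hcr, rfl⟩) hwle
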